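/- Let g be a finitely-valued, non-degenerate real random variable with log-MGF Λ(t) = log E[e^{tg}], E[g] > 0 and Λ(−1) = 0. Define r(t) := ∫₀^t Λ(τ)/τ dτ (with the integrand extended continuously by Λ'(0) at τ = 0). Then r is strictly convex on ℝ, r(0) = 0, r'(0) = E[g] > 0, r'(−1) = 0, and r(t) < 0 for all t ∈ [−1, 0). -/

import Mathlib

open Finset in
lemma cs_strict {Y : Type*} [Fintype Y] (w v : Y → ℝ) (hw : ∀ y, 0 < w y)
    (hv : ∃ y y' : Y, v y ≠ v y') :
    (∑ y, w y * v y) ^ 2 < (∑ y, w y) * (∑ y, w y * v y ^ 2) := by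
  have key : (0:ℝ) < ∑ y, ∑ z, w y * w z * (v y - v z) ^ 2 := by
    obtain ⟨a, b, hab⟩ := hv
    have hsq : (0:ℝ) < (v a - v b) ^ 2 := by
      have := sub_ne_zero.mpr hab
      positivity
    refine Finset.sum_pos' (fun y _ => Finset.sum_nonneg fun z _ =>
      mul_nonneg (mul_nonneg (hw y).le (hw z).le) (sq_nonneg _)) ⟨a, mem_univ a, ?_⟩
    refine Finset.sum_pos' (fun z _ =>
      mul_nonneg (mul_nonneg (hw a).le (hw z).le) (sq_nonneg _)) ⟨b, mem_univ b, ?_⟩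
    exact mul_pos (mul_pos (hw a) (hw b)) hsq
  have expand : ∑ y, ∑ z, w y * w z * (v y - v z) ^ 2
      = 2 * ((∑ y, w y) * (∑ y, w y * v y ^ 2) - (∑ y, w y * v y) ^ 2) := by
    have h1 : (∑ y, w y) * (∑ y, w y * v y ^ 2) = ∑ y, ∑ z, w y * (w z * v z ^ 2) :=
      Finset.sum_mul_sum _ _ _ _
    have h2 : (∑ y, w y * v y) ^ 2 = ∑ y, ∑ z, (w y * v y) * (w z * v z) := by
      rw [sq]; exact Finset.sum_mul_sum _ _ _ _
    have h3 : (∑ y, w y) * (∑ y, w y * v y ^ 2) = ∑ y, ∑ z, (w y * v y ^ 2) * w z := by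
      rw [mul_comm, Finset.sum_mul_sum]
    calc ∑ y, ∑ z, w y * w z * (v y - v z) ^ 2
        = ∑ y, ∑ z, (w y * (w z * v z ^ 2) + (w y * v y ^ 2) * w z
            - (w y * v y) * (w z * v z) * 2) := by
          refine Finset.sum_congr rfl fun y _ => Finset.sum_congr rfl fun z _ => by ring
      _ = _ := by
          simp only [Finset.sum_add_distrib, Finset.sum_sub_distrib, ← Finset.sum_mul, ← h1, ← h2, ← h3]
          ring
  rw [expand] at key
  linarith

open Finset in
lemma sum_exp_hasDerivAt {Y : Type*} [Fintype Y] (c a : Y → ℝ) (t : ℝ) :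
    HasDerivAt (fun t => ∑ y, c y * Real.exp (t * a y))
      (∑ y, (c y * a y) * Real.exp (t * a y)) t := by
  refine HasDerivAt.fun_sum fun y _ => ?_
  have h := (((hasDerivAt_id t).mul_const (a y)).exp).const_mul (c y)
  convert h using 1
  · rfl
  all_goals simp only [id_eq]
  ring
/-- let `g` be finitely valued and non-degenerate with log-MGF
`Λ(t) = log ∑_y p(y) e^{t v(y)}`, mean `E[g] > 0` and `Λ(−1) = 0`.  Define
`r(t) = ∫₀^t Λ(τ)/τ dτ` (the integrand extended by `Λ'(0)` at `τ = 0`).  Then `r` is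
strictly convex, `r(0) = 0`, `r'(0) = E[g] > 0`, `r'(−1) = 0`, and `r(t) < 0` on
`[−1, 0)`. -/
theorem r_function_properties {Y : Type*} [Fintype Y] [Nonempty Y]
    (p : Y → ℝ) (hp : ∀ y, 0 < p y) (hps : ∑ y, p y = 1)
    (v : Y → ℝ) (hv : ∃ y y' : Y, v y ≠ v y')
    (Λ : ℝ → ℝ)
    (hΛ : ∀ t, Λ t = Real.log (∑ y, p y * Real.exp (t * v y)))
    (hmean : 0 < ∑ y, p y * v y)
    (hΛneg1 : Λ (-1) = 0)
    (r : ℝ → ℝ)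
    (hr : ∀ t, r t = ∫ τ in (0 : ℝ)..t,
      (if τ = 0 then deriv Λ 0 else Λ τ / τ)) :
    StrictConvexOn ℝ Set.univ r ∧
    r 0 = 0 ∧
    deriv r 0 = ∑ y, p y * v y ∧
    0 < deriv r 0 ∧
    deriv r (-1) = 0 ∧
    (∀ t ∈ Set.Ico (-1 : ℝ) 0, r t < 0) := by
  classical
  set S : ℝ → ℝ := fun t => ∑ y, p y * Real.exp (t * v y) with hSdef
  set S1 : ℝ → ℝ := fun t => ∑ y, (p y * v y) * Real.exp (t * v y) with hS1def
  set S2 : ℝ → ℝ := fun t => ∑ y, ((p y * v y) * v y) * Real.exp (t * v y) with hS2def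
  have hSpos : ∀ t, 0 < S t := fun t =>
    Finset.sum_pos (fun y _ => mul_pos (hp y) (Real.exp_pos _)) Finset.univ_nonempty
  have hS : ∀ t, HasDerivAt S (S1 t) t := fun t => sum_exp_hasDerivAt p v t
  have hS1 : ∀ t, HasDerivAt S1 (S2 t) t := fun t => sum_exp_hasDerivAt (fun y => p y * v y) v t
  have hΛeq : Λ = fun t => Real.log (S t) := funext hΛ
  set L : ℝ → ℝ := fun t => S1 t / S t with hLdef
  have hL : ∀ t, HasDerivAt Λ (L t) t := fun t => by
    rw [hΛeq]; exact (hS t).log (hSpos t).ne'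
  have hderivΛ : deriv Λ = L := funext fun t => (hL t).deriv
  have hL' : ∀ t, HasDerivAt L ((S2 t * S t - S1 t * S1 t) / (S t) ^ 2) t := fun t => by
    have := (hS1 t).div (hS t) (hSpos t).ne'
    exact this
  have hLpos : ∀ t, 0 < (S2 t * S t - S1 t * S1 t) / (S t) ^ 2 := fun t => by
    apply div_pos _ (pow_pos (hSpos t) 2)
    have hcs := cs_strict (fun y => p y * Real.exp (t * v y)) v
      (fun y => mul_pos (hp y) (Real.exp_pos _)) hv
    have e1 : S1 t = ∑ y, (p y * Real.exp (t * v y)) * v y :=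
      Finset.sum_congr rfl fun y _ => by ring
    have e2 : S2 t = ∑ y, (p y * Real.exp (t * v y)) * v y ^ 2 :=
      Finset.sum_congr rfl fun y _ => by ring
    have e3 : S t = ∑ y, p y * Real.exp (t * v y) := rfl
    rw [e1, e2, e3]
    nlinarith [hcs]
  have hLmono : StrictMono L := strictMono_of_deriv_pos fun t => by
    rw [(hL' t).deriv]; exact hLpos t
  have hΛdiff : Differentiable ℝ Λ := fun t => (hL t).differentiableAt
  have hΛconv : StrictConvexOn ℝ Set.univ Λ :=
    StrictMono.strictConvexOn_univ_of_deriv hΛdiff.continuous (hderivΛ ▸ hLmono)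
  have hΛ0 : Λ 0 = 0 := by rw [hΛ 0]; simp [hps]
  have hL0 : L 0 = ∑ y, p y * v y := by
    have h1 : S 0 = 1 := by simp [hSdef, hps]
    have h2 : S1 0 = ∑ y, p y * v y := by simp [hS1def]
    rw [hLdef]; simp only [h1, h2, div_one]
  set f : ℝ → ℝ := fun τ => if τ = 0 then deriv Λ 0 else Λ τ / τ with hfdef
  have hfne : ∀ τ : ℝ, τ ≠ 0 → f τ = Λ τ / τ := fun τ h => if_neg h
  have hf0 : f 0 = ∑ y, p y * v y := by rw [hfdef]; simp [hderivΛ, hL0]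
  have hfmono : StrictMono f := by
    intro s t hst
    rcases eq_or_ne s 0 with rfl | hs
    · have ht : t ≠ 0 := ne_of_gt hst
      have h := hΛconv.deriv_lt_slope (Set.mem_univ 0) (Set.mem_univ t) hst (hΛdiff 0)
      rw [hfne t ht, hfdef]
      simp only [if_pos rfl]
      rwa [slope_def_field, hΛ0, sub_zero, sub_zero] at h
    rcases eq_or_ne t 0 with rfl | ht
    · have h := hΛconv.slope_lt_deriv (Set.mem_univ s) (Set.mem_univ 0) hst (hΛdiff 0)
      rw [hfne s hs, hfdef]
      simp only [if_pos rfl]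
      rw [slope_def_field, hΛ0] at h
      have he : (0 - Λ s) / (0 - s) = Λ s / s := by
        rw [zero_sub, zero_sub, neg_div_neg_eq]
      rwa [he] at h
    · have h := hΛconv.secant_strict_mono (a := 0) (Set.mem_univ 0) (Set.mem_univ s)
        (Set.mem_univ t) hs ht hst
      rw [hfne s hs, hfne t ht]
      rwa [hΛ0, sub_zero, sub_zero, sub_zero, sub_zero] at h
  have hfc : Continuous f := by
    rw [continuous_iff_continuousAt]
    intro x
    rcases eq_or_ne x 0 with rfl | hx
    · have h1 : Filter.Tendsto (slope Λ 0) (nhdsWithin 0 {0}ᶜ) (nhds (L 0)) :=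
        hasDerivAt_iff_tendsto_slope.mp (hL 0)
      have h2 : Filter.Tendsto f (nhdsWithin 0 {0}ᶜ) (nhds (f 0)) := by
        have hfL : f 0 = L 0 := by rw [hfdef]; simp [hderivΛ]
        rw [hfL]
        refine h1.congr' ?_
        filter_upwards [self_mem_nhdsWithin] with τ hτ
        have hτ0 : τ ≠ 0 := hτ
        rw [slope_def_field, hΛ0, sub_zero, sub_zero, hfne τ hτ0]
      unfold ContinuousAt
      rw [← nhdsNE_sup_pure, Filter.tendsto_sup]
      exact ⟨h2, tendsto_pure_nhds f 0⟩
    · have hc : ContinuousAt (fun τ => Λ τ / τ) x :=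
        (hΛdiff.continuous.continuousAt).div continuousAt_id hx
      refine hc.congr ?_
      filter_upwards [eventually_ne_nhds hx] with τ hτ
      exact (hfne τ hτ).symm
  have hre : r = fun u => ∫ τ in (0:ℝ)..u, f τ := funext hr
  have hrderiv : ∀ t, HasDerivAt r (f t) t := fun t => by
    rw [hre]
    exact intervalIntegral.integral_hasDerivAt_right (hfc.intervalIntegrable 0 t)
      (hfc.stronglyMeasurableAtFilter _ _) hfc.continuousAt
  have hderivr : deriv r = f := funext fun t => (hrderiv t).deriv
  have hfm1 : f (-1) = 0 := by
    rw [hfne (-1) (by norm_num), hΛneg1, zero_div]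
  refine ⟨?_, ?_, ?_, ?_, ?_, ?_⟩
  · exact StrictMono.strictConvexOn_univ_of_deriv
      (Differentiable.continuous fun t => (hrderiv t).differentiableAt) (hderivr ▸ hfmono)
  · rw [hr 0, intervalIntegral.integral_same]
  · rw [hderivr, hf0]
  · rw [hderivr, hf0]; exact hmean
  · rw [hderivr, hfm1]
  · rintro t ⟨h1, h2⟩
    have hpos : 0 < ∫ τ in t..(0:ℝ), f τ := by
      apply intervalIntegral.integral_pos h2 hfc.continuousOn
      · intro x hx
        have hxgt : (-1:ℝ) < x := lt_of_le_of_lt h1 hx.1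
        have := hfmono hxgt
        rw [hfm1] at this
        exact this.le
      · exact ⟨0, ⟨h2.le, le_refl 0⟩, by rw [hf0]; exact hmean⟩
    have hsym : r t = -∫ τ in t..(0:ℝ), f τ := by
      rw [hr t, intervalIntegral.integral_symm]
    rw [hsym]
    linarith
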